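/- Let $R$ be a commutative Noetherian ring and $N$ an $R$-module whose support is contained in a finite set of maximal ideals $\{\mathfrak{m}_1, \dots, \mathfrak{m}_t\}$. If the localization $N_{\mathfrak{m}_c}$ is a finitely generated $R_{\mathfrak{m}_c}$-module for each $1 \le c \le t$, then $N$ is a finitely generated $R$-module. -/

import Mathlib

theorem stmt_6 (R : Type) [CommRing R] [IsNoetherianRing R]
    (t : ℕ) (m : Fin t → Ideal R) (hm : ∀ c, (m c).IsMaximal)
    (N : Type) [AddCommGroup N] [Module R N]
    (hsupp : Module.support R N ⊆ {p : PrimeSpectrum R | ∃ c, p.asIdeal = m c})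
    (hfg : ∀ c, Module.Finite (Localization.AtPrime (m c))
      (LocalizedModule (m c).primeCompl N)) :
    Module.Finite R N := by
  classical
  -- For each `c`, choose a finite set of elements of `N` whose images generate the
  -- localization at `m c`.
  have hgen : ∀ c : Fin t, ∃ S : Finset N,
      Submodule.span (Localization.AtPrime (m c))
        ((LocalizedModule.mkLinearMap (m c).primeCompl N) '' (S : Set N)) = ⊤ := by
    intro c
    obtain ⟨S, hS⟩ := (hfg c).fg_top
    have surj : ∀ y : LocalizedModule (m c).primeCompl N,
        ∃ p : N × (m c).primeCompl, LocalizedModule.mk p.1 p.2 = y := by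
      intro y
      induction y using LocalizedModule.induction_on with
      | h x s => exact ⟨⟨x, s⟩, rfl⟩
    choose g hg using surj
    refine ⟨S.image (fun y => (g y).1), ?_⟩
    rw [eq_top_iff, ← hS]
    refine Submodule.span_le.mpr ?_
    intro y hy
    have key : y = Localization.mk (1 : R) (g y).2 •
        (LocalizedModule.mkLinearMap (m c).primeCompl N) (g y).1 := by
      rw [LocalizedModule.mkLinearMap_apply, LocalizedModule.mk_smul_mk, one_smul, mul_one,
        hg y]
    rw [key]
    exact Submodule.smul_mem _ _ (Submodule.subset_span
      ⟨(g y).1, Finset.mem_coe.mpr (Finset.mem_image_of_mem _ hy), rfl⟩)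
  choose S hS using hgen
  classical
  set T : Finset N := Finset.univ.biUnion S with hT
  suffices h : Submodule.span R (T : Set N) = ⊤ by
    exact ⟨⟨T, h⟩⟩
  apply Submodule.eq_top_of_localization_maximal
    (fun P _ => Localization.AtPrime P)
    (fun P _ => LocalizedModule P.primeCompl N)
    (fun P _ => LocalizedModule.mkLinearMap P.primeCompl N)
  intro P hP
  rw [Submodule.localized'_span]
  by_cases hPc : ∃ c, P = m c
  · obtain ⟨c, rfl⟩ := hPc
    rw [eq_top_iff, ← hS c]
    exact Submodule.span_mono (Set.image_mono (by
      intro x hx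
      exact Finset.mem_biUnion.mpr ⟨c, Finset.mem_univ c, hx⟩))
  · have hnot : (⟨P, hP.isPrime⟩ : PrimeSpectrum R) ∉ Module.support R N := by
      intro hmem
      obtain ⟨c, hc⟩ := hsupp hmem
      exact hPc ⟨c, hc⟩
    haveI := Module.notMem_support_iff.mp hnot
    exact Subsingleton.elim _ _
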